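/- If every nonempty open subset U of a topological space X satisfies ls(U) ≥ κ (i.e., U cannot be written as a union of fewer than κ left-separated subspaces), then X is κ-resolvable. -/

import Mathlib

universe u

open Cardinal Set

/-- A space is `κ`-resolvable iff it has `κ` pairwise disjoint dense subsets. -/
def Resolvable (X : Type u) [TopologicalSpace X] (κ : Cardinal.{u}) : Prop :=
  ∃ (ι : Type u) (D : ι → Set X), #ι = κ ∧ (∀ i, Dense (D i)) ∧
    Pairwise (Function.onFun Disjoint D)

/-- `L` is left-separated: it has a well-ordering all of whose initial segments
are closed in the subspace `L`. -/
def LeftSeparated {X : Type u} [TopologicalSpace X] (L : Set X) : Prop :=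
  ∃ r : L → L → Prop, IsWellOrder L r ∧ ∀ x : L, IsClosed {y : L | r y x}

/-- `R` is right-separated: it has a well-ordering all of whose initial segments
are open in the subspace `R`. -/
def RightSeparated {X : Type u} [TopologicalSpace X] (R : Set X) : Prop :=
  ∃ r : R → R → Prop, IsWellOrder R r ∧ ∀ x : R, IsOpen {y : R | r y x}

/-- The dispersion character `Δ(X)`: the minimal cardinality of a nonempty open set. -/
noncomputable def dispersion (X : Type u) [TopologicalSpace X] : Cardinal.{u} :=
  sInf {c | ∃ G : Set X, IsOpen G ∧ G.Nonempty ∧ #G = c}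

section Aux

variable {X : Type u} [TopologicalSpace X]

/-- Every subset `S` of a space contains a left-separated set `D` which is dense in `S`. -/
theorem exists_dense_leftSeparated (S : Set X) :
    ∃ D : Set X, D ⊆ S ∧ S ⊆ closure D ∧ LeftSeparated D := by
  classical
  let r : X → X → Prop := WellOrderingRel
  haveI : IsWellOrder X r := WellOrderingRel.isWellOrder
  set D : Set X := {y | y ∈ S ∧ y ∉ closure {z | z ∈ S ∧ r z y}} with hD
  have hDS : D ⊆ S := fun y hy => hy.1
  refine ⟨D, hDS, ?_, ?_⟩
  · -- density
    by_contra hcl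
    rw [not_subset] at hcl
    obtain ⟨y₀, ⟨hy₀S, hy₀⟩, hmin⟩ :
        ∃ y₀, (y₀ ∈ S ∧ y₀ ∉ closure D) ∧ ∀ z, (z ∈ S ∧ z ∉ closure D) → ¬ r z y₀ := by
      obtain ⟨y, hyS, hy⟩ := hcl
      obtain ⟨y₀, h₀, hm⟩ := (IsWellFounded.wf (r := r)).has_min
        {y | y ∈ S ∧ y ∉ closure D} ⟨y, hyS, hy⟩
      exact ⟨y₀, ⟨h₀.1, h₀.2⟩, fun z hz => hm z hz⟩
    have hsub : {z | z ∈ S ∧ r z y₀} ⊆ closure D := by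
      rintro z ⟨hzS, hz⟩
      by_contra hz'
      exact hmin z ⟨hzS, hz'⟩ hz
    have : y₀ ∈ D := by
      refine ⟨hy₀S, fun hc => hy₀ ?_⟩
      exact closure_minimal hsub isClosed_closure hc
    exact hy₀ (subset_closure this)
  · -- left-separated
    refine ⟨Subrel r (· ∈ D), inferInstance, fun x => ?_⟩
    have key : {y : D | Subrel r (· ∈ D) y x} = Subtype.val ⁻¹' closure {z | z ∈ S ∧ r z x.1} := by
      ext y
      simp only [mem_setOf_eq, mem_preimage, subrel_val]
      constructor
      · intro hyx
        exact subset_closure ⟨y.2.1, hyx⟩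
      · intro hy
        rcases trichotomous_of r y.1 x.1 with h | h | h
        · exact h
        · exact absurd (h ▸ hy) y.2.2
        · exfalso
          refine y.2.2 (closure_mono ?_ hy)
          rintro z ⟨hzS, hz⟩
          exact ⟨hzS, _root_.trans hz h⟩
    rw [key]
    exact isClosed_closure.preimage continuous_subtype_val

/-- A choice of a dense left-separated subset of `S`. -/
noncomputable def denseLS (S : Set X) : Set X :=
  (exists_dense_leftSeparated S).choose

theorem denseLS_subset (S : Set X) : denseLS S ⊆ S :=
  (exists_dense_leftSeparated S).choose_spec.1

theorem subset_closure_denseLS (S : Set X) : S ⊆ closure (denseLS S) :=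
  (exists_dense_leftSeparated S).choose_spec.2.1

theorem leftSeparated_denseLS (S : Set X) : LeftSeparated (denseLS S) :=
  (exists_dense_leftSeparated S).choose_spec.2.2

/-- Transfinite sequence of disjoint left-separated sets, each dense in the complement of the
previous ones. -/
noncomputable def lsFam (κ : Cardinal.{u}) : κ.ord.ToType → Set X :=
  (wellFounded_lt (α := κ.ord.ToType)).fix
    (fun a ih => denseLS (univ \ ⋃ b : Iio a, ih b b.2))

theorem lsFam_eq (κ : Cardinal.{u}) (a : κ.ord.ToType) :
    lsFam (X := X) κ a = denseLS (univ \ ⋃ b : Iio a, lsFam κ b.1) := by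
  rw [lsFam, WellFounded.fix_eq]

end Aux

/-- If no nonempty open subset of `X` can be covered by fewer than `κ`
left-separated sets, then `X` is `κ`-resolvable. -/
theorem stmt1 {X : Type u} [TopologicalSpace X] (κ : Cardinal.{u})
    (h : ∀ U : Set X, IsOpen U → U.Nonempty →
      ∀ (ι : Type u) (L : ι → Set X), (∀ i, LeftSeparated (L i)) →
        U ⊆ ⋃ i, L i → κ ≤ #ι) :
    Resolvable X κ := by
  classical
  refine ⟨κ.ord.ToType, lsFam κ, Cardinal.mk_ord_toType κ, ?_, ?_⟩
  · intro a
    set S : Set X := univ \ ⋃ b : Iio a, lsFam (X := X) κ b.1 with hS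
    have hdense : Dense S := by
      by_contra hd
      rw [Dense] at hd
      push_neg at hd
      obtain ⟨x, hx⟩ := hd
      have hU : (closure S)ᶜ ⊆ ⋃ b : Iio a, lsFam (X := X) κ b.1 := by
        intro y hy
        by_contra hy'
        exact hy (subset_closure ⟨trivial, hy'⟩)
      have hκ := h (closure S)ᶜ isClosed_closure.isOpen_compl ⟨x, hx⟩
        (Iio a) (fun b => lsFam κ b.1)
        (fun b => by
          show LeftSeparated (lsFam κ b.1)
          rw [lsFam_eq]; exact leftSeparated_denseLS _) hU
      exact absurd hκ (not_le.mpr (Cardinal.mk_Iio_ord_toType a))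
    have h1 : S ⊆ closure (lsFam κ a) := by
      rw [lsFam_eq]; exact subset_closure_denseLS _
    have h2 : closure S ⊆ closure (lsFam κ a) := closure_minimal h1 isClosed_closure
    exact fun x => h2 (hdense x)
  · have key : ∀ a b : κ.ord.ToType, b < a → Disjoint (lsFam (X := X) κ a) (lsFam κ b) := by
      intro a b hlt
      have hsub : lsFam (X := X) κ a ⊆ univ \ ⋃ c : Iio a, lsFam κ c.1 := by
        rw [lsFam_eq]; exact denseLS_subset _
      rw [disjoint_left]
      intro x hxa hxb
      exact (hsub hxa).2 (mem_iUnion.mpr ⟨⟨b, hlt⟩, hxb⟩)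
    intro a b hab
    rcases hab.lt_or_gt with hlt | hlt
    · exact (key b a hlt).symm
    · exact key a b hlt
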